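/- Let F be a commutative cancellative monoid that is a discrete valuation monoid whose unit group F^× is finite cyclic of order n ≥ 2, generated by α, and let p ∈ F generate the maximal ideal (F \ F^× = pF). Let H be the submonoid of F generated by {p} ∪ {α^k p^n : 1 ≤ k ≤ n-1}. Then the extension H ⊆ F is not inert: there exist x, y ∈ F with x·y ∈ H but no ε ∈ F^× with x·ε ∈ H and y·ε^{-1} ∈ H (e.g., x = pα, y = p^{n-1}). -/
import Mathlib


theorem stmt19 {F : Type*} [CancelCommMonoid F] (n : ℕ) (hn : 2 ≤ n)
    (α : Fˣ) (hα : orderOf α = n) (hcyc : ∀ u : Fˣ, ∃ k : ℕ, u = α ^ k)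
    (p : F) (hp : ¬IsUnit p)
    (hdvm : ∀ x : F, ∃ (ε : Fˣ) (m : ℕ), x = ↑ε * p ^ m)
    (hmax : ∀ x : F, ¬IsUnit x → ∃ y : F, x = p * y)
    (H : Submonoid F)
    (hH : H = Submonoid.closure
      ({p} ∪ {x : F | ∃ k : ℕ, 1 ≤ k ∧ k ≤ n - 1 ∧ x = (↑α : F) ^ k * p ^ n})) :
    ∃ x y : F, x * y ∈ H ∧ ∀ ε : Fˣ, ¬(x * ↑ε ∈ H ∧ y * ↑ε⁻¹ ∈ H) := by
  subst hH
  set S : Set F := {p} ∪ {x : F | ∃ k : ℕ, 1 ≤ k ∧ k ≤ n - 1 ∧ x = (↑α : F) ^ k * p ^ n}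
    with hS
  have hpow_unit : ∀ d : ℕ, IsUnit (p ^ d) → d = 0 := by
    intro d hd
    cases d with
    | zero => rfl
    | succ m =>
      exfalso
      rw [pow_succ] at hd
      exact hp (isUnit_of_mul_isUnit_right hd)
  have key : ∀ (u v : Fˣ) (a c : ℕ), (u : F) * p ^ a = v * p ^ (a + c) → c = 0 ∧ u = v := by
    intro u v a c h
    rw [pow_add] at h
    have h' : (↑u : F) * p ^ a = ((v : F) * p ^ c) * p ^ a := by
      rw [h]; ac_rfl
    have h2 := mul_right_cancel h'
    have hUnit : IsUnit ((v : F) * p ^ c) := h2 ▸ u.isUnit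
    have hc : c = 0 := hpow_unit c (isUnit_of_mul_isUnit_right hUnit)
    subst hc
    rw [pow_zero, mul_one] at h2
    exact ⟨rfl, Units.ext h2⟩
  have hval : ∀ (u v : Fˣ) (a b : ℕ), (u : F) * p ^ a = v * p ^ b → a = b ∧ u = v := by
    intro u v a b h
    rcases le_total a b with hab | hab
    · obtain ⟨c, rfl⟩ := Nat.exists_eq_add_of_le hab
      obtain ⟨hc, huv⟩ := key u v a c h
      exact ⟨by omega, huv⟩
    · obtain ⟨c, rfl⟩ := Nat.exists_eq_add_of_le hab
      obtain ⟨hc, huv⟩ := key v u b c h.symm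
      exact ⟨by omega, huv.symm⟩
  have hmem : ∀ h ∈ Submonoid.closure S, ∃ K M : ℕ,
      h = ((α ^ K : Fˣ) : F) * p ^ M ∧ (n ∣ K ∨ n ≤ M) := by
    intro h hh
    induction hh using Submonoid.closure_induction with
    | mem x hx =>
      rcases hx with hx | ⟨k, hk1, hk2, hx⟩
      · exact ⟨0, 1, by simp [Set.mem_singleton_iff.mp hx], Or.inl (dvd_zero n)⟩
      · exact ⟨k, n, by rw [hx]; push_cast; rfl, Or.inr le_rfl⟩
    | one => exact ⟨0, 0, by simp, Or.inl (dvd_zero n)⟩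
    | mul x y _ _ hx hy =>
      obtain ⟨K1, M1, e1, c1⟩ := hx
      obtain ⟨K2, M2, e2, c2⟩ := hy
      refine ⟨K1 + K2, M1 + M2, ?_, ?_⟩
      · rw [e1, e2, pow_add, pow_add]; push_cast; ac_rfl
      · rcases c1 with c1 | c1
        · rcases c2 with c2 | c2
          · exact Or.inl (Nat.dvd_add c1 c2)
          · exact Or.inr (le_add_of_nonneg_of_le (Nat.zero_le _) c2)
        · exact Or.inr (le_add_of_le_of_nonneg c1 (Nat.zero_le _))
  have hpn : p * p ^ (n - 1) = p ^ n := by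
    rw [← pow_succ']; congr 1; omega
  refine ⟨p * ↑α, p ^ (n - 1), ?_, ?_⟩
  · have hgen : (↑α : F) ^ 1 * p ^ n ∈ S := by
      refine Or.inr ⟨1, le_refl 1, by omega, rfl⟩
    have : p * ↑α * p ^ (n - 1) = (↑α : F) ^ 1 * p ^ n := by
      rw [← hpn, pow_one]; ac_rfl
    rw [this]
    exact Submonoid.subset_closure hgen
  · rintro ε ⟨h1, h2⟩
    obtain ⟨k, rfl⟩ := hcyc ε
    -- analyze h1
    obtain ⟨K, M, e1, c1⟩ := hmem _ h1
    have e1' : ((α ^ (k + 1) : Fˣ) : F) * p ^ 1 = ((α ^ K : Fˣ) : F) * p ^ M := by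
      rw [← e1]; push_cast; rw [pow_one, pow_succ]; ac_rfl
    obtain ⟨hM, hu⟩ := hval _ _ _ _ e1'
    have hK : n ∣ K := by
      rcases c1 with c1 | c1
      · exact c1
      · omega
    have h1' : α ^ (k + 1) = 1 := by
      rw [hu]
      exact orderOf_dvd_iff_pow_eq_one.mp (hα ▸ hK)
    have hd1 : n ∣ k + 1 := by
      rw [← hα]; exact orderOf_dvd_iff_pow_eq_one.mpr h1'
    -- analyze h2
    obtain ⟨K', M', e2, c2⟩ := hmem _ h2
    have e2' : (((α ^ k)⁻¹ : Fˣ) : F) * p ^ (n - 1) = ((α ^ K' : Fˣ) : F) * p ^ M' := by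
      rw [← e2]; push_cast; ac_rfl
    obtain ⟨hM', hu'⟩ := hval _ _ _ _ e2'
    have hK' : n ∣ K' := by
      rcases c2 with c2 | c2
      · exact c2
      · omega
    have h2' : (α ^ k)⁻¹ = 1 := by
      rw [hu']
      exact orderOf_dvd_iff_pow_eq_one.mp (hα ▸ hK')
    have hd2 : n ∣ k := by
      rw [← hα]
      exact orderOf_dvd_iff_pow_eq_one.mpr (by rw [← inv_inv (α ^ k), h2', inv_one])
    have : n ∣ 1 := by simpa using Nat.dvd_sub hd1 hd2
    exact absurd (Nat.le_of_dvd one_pos this) (by omega)
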